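/- Let n ≥ 3 be an integer, U ⊆ ℝⁿ open, and ξ : U → ℝⁿ a C^∞ nowhere-vanishing vector field satisfying the conformal Killing equation for the flat Euclidean metric: ∂_A ξ_B + ∂_B ξ_A = (2/n)(Σ_C ∂_C ξ_C) δ_{AB} on U for all A, B. Define the symmetric 2-tensor field D_ξ on U by (D_ξ)_{AB} := |ξ|^{−(n+2)} ( ξ_A ξ_B − (|ξ|²/n) δ_{AB} ). Then D_ξ is transverse and traceless: Σ_A (D_ξ)_{AA} = 0 and Σ_A ∂_A (D_ξ)_{AB} = 0 on U for every B. -/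

import Mathlib

open scoped BigOperators

/-- Partial derivative `∂_A f` of a scalar function on `ℝ^n`. -/
noncomputable def pd {n : ℕ} (A : Fin n) (f : (Fin n → ℝ) → ℝ) (x : Fin n → ℝ) : ℝ :=
  fderiv ℝ f x (Pi.single A 1)

/-- The symmetric 2-tensor field
`(D_ξ)_{AB} = |ξ|^{−(n+2)} ( ξ_A ξ_B − (|ξ|²/n) δ_{AB} )` on flat `ℝⁿ`. -/
noncomputable def Dxi {n : ℕ} (ξ : (Fin n → ℝ) → (Fin n → ℝ)) (A B : Fin n)
    (x : Fin n → ℝ) : ℝ :=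
  ((Real.sqrt (∑ C, (ξ x C)^2)) ^ (n+2))⁻¹ *
    (ξ x A * ξ x B - ((∑ C, (ξ x C)^2) / (n : ℝ)) * (if A = B then (1:ℝ) else 0))

lemma sqrt_pow_inv_eq_rpow (n : ℕ) (s : ℝ) (hs : 0 < s) :
    ((Real.sqrt s) ^ (n+2))⁻¹ = s ^ (-(((n:ℝ)+2)/2)) := by
  rw [Real.sqrt_eq_rpow, ← Real.rpow_natCast (s ^ ((1:ℝ)/2)) (n+2), ← Real.rpow_mul hs.le,
    ← Real.rpow_neg hs.le]
  norm_num
  ring_nf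

/-- equation (4.24) of the paper.  For a smooth nowhere-vanishing
conformal Killing vector field `ξ` of the flat Euclidean metric on `U ⊆ ℝⁿ`, the tensor
`D_ξ` is transverse and traceless. -/
theorem statement11
    (n : ℕ) (hn : 3 ≤ n)
    (U : Set (Fin n → ℝ)) (hU : IsOpen U)
    (ξ : (Fin n → ℝ) → (Fin n → ℝ))
    (hξC : ∀ A : Fin n, ContDiffOn ℝ (⊤ : ℕ∞) (fun x => ξ x A) U)
    (hξ0 : ∀ x ∈ U, ξ x ≠ 0)
    (hCKV : ∀ x ∈ U, ∀ A B : Fin n,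
      pd A (fun y => ξ y B) x + pd B (fun y => ξ y A) x
        = (2/(n : ℝ)) * (∑ C, pd C (fun y => ξ y C) x) * (if A = B then (1:ℝ) else 0)) :
    ∀ x ∈ U,
      (∑ A, Dxi ξ A A x = 0) ∧
      (∀ B : Fin n, ∑ A, pd A (fun y => Dxi ξ A B y) x = 0) := by
  intro x hx
  have hn0 : (n : ℝ) ≠ 0 := by positivity
  -- the squared norm
  set f : (Fin n → ℝ) → ℝ := fun y => ∑ C, (ξ y C)^2 with hf_def
  have hfx_pos : 0 < f x := by
    obtain ⟨C, hC⟩ := Function.ne_iff.mp (hξ0 x hx)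
    have hC' : ξ x C ≠ 0 := by simpa using hC
    exact Finset.sum_pos' (fun i _ => sq_nonneg _)
      ⟨C, Finset.mem_univ C, by positivity⟩
  have hfx_ne : f x ≠ 0 := hfx_pos.ne'
  -- trace part
  have trace : ∑ A, Dxi ξ A A x = 0 := by
    have h1 : ∀ A : Fin n, Dxi ξ A A x
        = ((Real.sqrt (f x)) ^ (n+2))⁻¹ * (ξ x A * ξ x A - f x / n) := by
      intro A; simp [Dxi, hf_def]
    rw [Finset.sum_congr rfl (fun A _ => h1 A), ← Finset.mul_sum]
    have h2 : ∑ A : Fin n, (ξ x A * ξ x A - f x / n) = 0 := by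
      rw [Finset.sum_sub_distrib, Finset.sum_const, Finset.card_fin]
      have : ∑ A : Fin n, ξ x A * ξ x A = f x := by
        rw [hf_def]; exact Finset.sum_congr rfl (fun A _ => (sq (ξ x A)).symm ▸ by ring)
      rw [this, nsmul_eq_mul, mul_div_cancel₀ _ hn0, sub_self]
    rw [h2, mul_zero]
  refine ⟨trace, ?_⟩
  intro B
  -- differentiability data
  have hdiff : ∀ C, DifferentiableAt ℝ (fun y => ξ y C) x := fun C =>
    ((hξC C).contDiffAt (hU.mem_nhds hx)).differentiableAt (by simp)
  set L : Fin n → (Fin n → ℝ) →L[ℝ] ℝ := fun C => fderiv ℝ (fun y => ξ y C) x with hL_def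
  have hL : ∀ C, HasFDerivAt (fun y => ξ y C) (L C) x := fun C => (hdiff C).hasFDerivAt
  set p : Fin n → Fin n → ℝ := fun A C => L C (Pi.single A 1) with hp_def
  -- derivative of f
  set Lf : (Fin n → ℝ) →L[ℝ] ℝ := ∑ C, (2 * ξ x C) • L C with hLf_def
  have hf : HasFDerivAt f Lf x := by
    have h1 : ∀ C : Fin n, HasFDerivAt (fun y => (ξ y C)^2) ((2 * ξ x C) • L C) x := by
      intro C
      have := (hL C).fun_mul (hL C)
      have heq : (fun y => ξ y C * ξ y C) = fun y => (ξ y C)^2 := by ext y; ring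
      rw [heq] at this
      rw [two_mul, add_smul]
      exact this
    exact HasFDerivAt.fun_sum (fun C _ => h1 C)
  have hLf_apply : ∀ A, Lf (Pi.single A 1) = 2 * ∑ C, ξ x C * p A C := by
    intro A
    rw [hLf_def, ContinuousLinearMap.sum_apply, Finset.mul_sum]
    exact Finset.sum_congr rfl (fun C _ => by
      rw [ContinuousLinearMap.smul_apply, smul_eq_mul, hp_def]; ring)
  -- abbreviations
  set S : Fin n → ℝ := fun A => ∑ C, ξ x C * p A C with hS_def
  set T : ℝ := ∑ C, p C C with hT_def
  set e : ℝ := -(((n:ℝ)+2)/2) with he_def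
  set δ : Fin n → ℝ := fun A => if A = B then (1:ℝ) else 0 with hδ_def
  -- conformal Killing in terms of p
  have hsym : ∀ A C : Fin n, p A C + p C A
      = 2/(n:ℝ) * T * (if A = C then (1:ℝ) else 0) := by
    intro A C
    have := hCKV x hx A C
    simpa [pd, hp_def, hL_def, hT_def, mul_assoc] using this
  -- key formula for each partial derivative
  have key : ∀ A : Fin n, pd A (fun y => Dxi ξ A B y) x
      = f x ^ e * (ξ x A * p A B + ξ x B * p A A - δ A / n * (2 * S A))
        + (ξ x A * ξ x B - δ A / n * f x) * (e * f x ^ (e-1) * (2 * S A)) := by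
    intro A
    -- bracket function
    set b : (Fin n → ℝ) → ℝ := fun y => ξ y A * ξ y B - δ A / n * f y with hb_def
    set Lb : (Fin n → ℝ) →L[ℝ] ℝ := (ξ x A • L B + ξ x B • L A) - (δ A / n) • Lf
      with hLb_def
    have hb : HasFDerivAt b Lb x := ((hL A).mul (hL B)).sub (hf.const_mul (δ A / n))
    have hg : HasFDerivAt (fun y => f y ^ e) ((e * f x ^ (e-1)) • Lf) x :=
      hf.rpow_const (Or.inl hfx_ne)
    have hG : HasFDerivAt (fun y => f y ^ e * b y)
        ((f x ^ e) • Lb + (b x) • ((e * f x ^ (e-1)) • Lf)) x := hg.mul hb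
    -- eventual equality
    have hev : (fun y => Dxi ξ A B y) =ᶠ[nhds x] (fun y => f y ^ e * b y) := by
      have hfc : ContinuousAt f x := hf.continuousAt
      have hmem : f ⁻¹' (Set.Ioi 0) ∈ nhds x :=
        hfc.preimage_mem_nhds (Ioi_mem_nhds hfx_pos)
      filter_upwards [hmem] with y hy
      have hy' : 0 < f y := hy
      rw [Dxi]
      have : (∑ C, (ξ y C)^2) = f y := rfl
      rw [this, sqrt_pow_inv_eq_rpow n (f y) hy', ← he_def, hb_def]
      ring_nf
      rfl
    have hfd : pd A (fun y => Dxi ξ A B y) x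
        = ((f x ^ e) • Lb + (b x) • ((e * f x ^ (e-1)) • Lf)) (Pi.single A 1) := by
      rw [pd, hev.fderiv_eq, hG.fderiv]
    rw [hfd]
    have hLbA : Lb (Pi.single A 1)
        = ξ x A * p A B + ξ x B * p A A - δ A / n * (2 * S A) := by
      rw [hLb_def]
      simp only [ContinuousLinearMap.sub_apply, ContinuousLinearMap.add_apply,
        ContinuousLinearMap.smul_apply, smul_eq_mul, hLf_apply A, hp_def, hS_def]
    have hbx : b x = ξ x A * ξ x B - δ A / n * f x := rfl
    simp only [ContinuousLinearMap.add_apply, ContinuousLinearMap.smul_apply,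
      smul_eq_mul, hLbA, hbx, hLf_apply A, hS_def]
  -- the two key algebraic identities from the CKV equation
  have hxp : ∀ A : Fin n, p A B = 2/(n:ℝ) * T * δ A - p B A := by
    intro A
    have := hsym A B
    rw [hδ_def]
    linarith [this]
  have h1 : ∑ A, ξ x A * p A B = 2/(n:ℝ) * T * ξ x B - S B := by
    have : ∑ A, ξ x A * p A B
        = ∑ A, (2/(n:ℝ) * T * (ξ x A * δ A) - ξ x A * p B A) := by
      refine Finset.sum_congr rfl (fun A _ => ?_)
      rw [hxp A]; ring
    rw [this, Finset.sum_sub_distrib, ← Finset.mul_sum]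
    have hd : ∑ A, ξ x A * δ A = ξ x B := by
      rw [hδ_def]
      simp [Finset.sum_ite_eq' Finset.univ B (fun A => ξ x A), mul_ite]
    have hs : ∑ A, ξ x A * p B A = S B := by rw [hS_def]
    rw [hd, hs]
  have h2 : ∑ A, S A * ξ x A = T / n * f x := by
    have hdouble : (2:ℝ) * ∑ A, S A * ξ x A
        = ∑ A, ∑ C, ξ x C * ξ x A * (p A C + p C A) := by
      have expand : ∑ A, S A * ξ x A = ∑ A, ∑ C, ξ x C * ξ x A * p A C := by
        refine Finset.sum_congr rfl (fun A _ => ?_)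
        rw [hS_def, Finset.sum_mul]
        exact Finset.sum_congr rfl (fun C _ => by ring)
      have swap : ∑ A, ∑ C, (ξ x C * ξ x A * p A C : ℝ)
          = ∑ A, ∑ C, ξ x C * ξ x A * p C A := by
        rw [Finset.sum_comm]
        refine Finset.sum_congr rfl (fun A _ => Finset.sum_congr rfl (fun C _ => by ring))
      rw [expand, two_mul]
      nth_rewrite 2 [swap]
      rw [← Finset.sum_add_distrib]
      refine Finset.sum_congr rfl (fun A _ => ?_)
      rw [← Finset.sum_add_distrib]
      exact Finset.sum_congr rfl (fun C _ => by ring)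
    have hrhs : ∑ A, ∑ C, (ξ x C * ξ x A * (p A C + p C A) : ℝ)
        = 2 * (T / n * f x) := by
      have : ∀ A : Fin n, ∑ C, (ξ x C * ξ x A * (p A C + p C A) : ℝ)
          = 2/(n:ℝ) * T * (ξ x A * ξ x A) := by
        intro A
        have : ∑ C, (ξ x C * ξ x A * (p A C + p C A) : ℝ)
            = ∑ C, (if C = A then 2/(n:ℝ) * T * (ξ x A * ξ x A) else 0) := by
          refine Finset.sum_congr rfl (fun C _ => ?_)
          rw [hsym A C]
          by_cases hAC : A = C
          · subst hAC; simp; ring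
          · simp [hAC, Ne.symm hAC]
        rw [this, Finset.sum_ite_eq' Finset.univ A]
        simp
      rw [Finset.sum_congr rfl (fun A _ => this A), ← Finset.mul_sum]
      have : ∑ A : Fin n, ξ x A * ξ x A = f x := by
        rw [hf_def]; exact Finset.sum_congr rfl (fun A _ => by ring)
      rw [this]; field_simp
    have := hdouble.trans hrhs
    linarith
  -- conclude
  rw [Finset.sum_congr rfl (fun A _ => key A)]
  rw [Finset.sum_add_distrib]
  have part1 : ∑ A, f x ^ e * (ξ x A * p A B + ξ x B * p A A - δ A / n * (2 * S A))
      = f x ^ e * ((2/(n:ℝ) * T * ξ x B - S B) + ξ x B * T - 2 / n * S B) := by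
    rw [← Finset.mul_sum]
    congr 1
    rw [Finset.sum_sub_distrib, Finset.sum_add_distrib, ← Finset.mul_sum, h1, ← hT_def]
    have hd : ∑ A, δ A / n * (2 * S A) = 2 / n * S B := by
      have : ∀ A : Fin n, δ A / n * (2 * S A) = if A = B then 2/(n:ℝ) * S A else 0 := by
        intro A; rw [hδ_def]
        by_cases h : A = B <;> simp [h] <;> ring
      rw [Finset.sum_congr rfl (fun A _ => this A),
        Finset.sum_ite_eq' Finset.univ B (fun A => 2/(n:ℝ) * S A)]
      simp
    rw [hd]
  have part2 : ∑ A, (ξ x A * ξ x B - δ A / n * f x) * (e * f x ^ (e-1) * (2 * S A))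
      = 2 * e * f x ^ (e-1) * ((T / n * f x) * ξ x B - f x / n * S B) := by
    have : ∀ A : Fin n, (ξ x A * ξ x B - δ A / n * f x) * (e * f x ^ (e-1) * (2 * S A))
        = 2 * e * f x ^ (e-1) * ξ x B * (S A * ξ x A)
          - 2 * e * f x ^ (e-1) * (f x / n) * (δ A * S A) := by
      intro A; ring
    rw [Finset.sum_congr rfl (fun A _ => this A), Finset.sum_sub_distrib,
      ← Finset.mul_sum, ← Finset.mul_sum, h2]
    have hd : ∑ A, δ A * S A = S B := by
      have : ∀ A : Fin n, δ A * S A = if A = B then S A else 0 := by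
        intro A; rw [hδ_def]; by_cases h : A = B <;> simp [h]
      rw [Finset.sum_congr rfl (fun A _ => this A),
        Finset.sum_ite_eq' Finset.univ B S]
      simp
    rw [hd]; ring
  rw [part1, part2]
  have hPQ : f x ^ (e-1) * f x = f x ^ e := by
    rw [Real.rpow_sub_one hfx_ne]; field_simp
  have he2 : 2 * e = -((n:ℝ)+2) := by rw [he_def]; ring
  -- final algebra
  have expand2 : 2 * e * f x ^ (e-1) * ((T / n * f x) * ξ x B - f x / n * S B)
      = 2 * e * (T / n) * ξ x B * (f x ^ (e-1) * f x)
        - 2 * e * (1/(n:ℝ)) * S B * (f x ^ (e-1) * f x) := by ring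
  rw [expand2, hPQ]
  field_simp
  ring_nf
  linear_combination (f x ^ e * T * ξ x B - f x ^ e * S B) * he2
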